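/- For 0 ≤ α < 1, the image of the unit circle under z ↦ Re(z/(1-αz²)), Im(z/(1-αz²)) lies on the curve (x²+y²)² = x²/(1-α)² + y²/(1+α)² (Booth lemniscate of elliptic type): for every φ, the point (x,y) = (Re F_α(e^{iφ}), Im F_α(e^{iφ})) satisfies (x²+y²)² - x²/(1-α)² - y²/(1+α)² = 0. -/

import Mathlib

open Complex Real

theorem booth_lemniscate (α : ℝ) (hα0 : 0 ≤ α) (hα1 : α < 1) (φ : ℝ)
    (x y : ℝ)
    (hx : x = (Complex.exp (φ * Complex.I) /
      (1 - (α : ℂ) * Complex.exp (φ * Complex.I) ^ 2)).re)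
    (hy : y = (Complex.exp (φ * Complex.I) /
      (1 - (α : ℂ) * Complex.exp (φ * Complex.I) ^ 2)).im) :
    (x ^ 2 + y ^ 2) ^ 2 - x ^ 2 / (1 - α) ^ 2 - y ^ 2 / (1 + α) ^ 2 = 0 := by
  have hpyth : Real.cos φ ^ 2 + Real.sin φ ^ 2 = 1 := by
    nlinarith [Real.sin_sq_add_cos_sq φ]
  set c := Real.cos φ with hc
  set s := Real.sin φ with hs
  have hz : Complex.exp (φ * Complex.I) = (c : ℂ) + (s : ℂ) * Complex.I := by
    rw [Complex.exp_mul_I]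
    simp [hc, hs]
  obtain ⟨D, hD⟩ : ∃ D : ℝ, D = (1 - α) ^ 2 * c ^ 2 + (1 + α) ^ 2 * s ^ 2 := ⟨_, rfl⟩
  have hDpos : 0 < D := by
    rw [hD]; nlinarith [sq_nonneg c, sq_nonneg s, sq_nonneg (1 + α)]
  have hDne : D ≠ 0 := ne_of_gt hDpos
  have hnorm : Complex.normSq (1 - (α : ℂ) * Complex.exp (φ * Complex.I) ^ 2) = D := by
    rw [hz, hD]
    simp [Complex.normSq_apply, pow_two, Complex.mul_re, Complex.mul_im]
    ring_nf
    linear_combination (α ^ 2 * (c ^ 2 + s ^ 2) - 1) * hpyth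
  have hxe : x = (1 - α) * c / D := by
    rw [hx, Complex.div_re, hnorm, hz]
    simp [pow_two, Complex.mul_re, Complex.mul_im]
    field_simp
    linear_combination (-c*α) * hpyth
  have hye : y = (1 + α) * s / D := by
    rw [hy, Complex.div_im, hnorm, hz]
    simp [pow_two, Complex.mul_re, Complex.mul_im]
    field_simp
    linear_combination (s*α) * hpyth
  have h1α : (1 - α) ≠ 0 := by nlinarith
  have h2α : (1 + α) ≠ 0 := by nlinarith
  have h1 : x ^ 2 + y ^ 2 = 1 / D := by
    rw [hxe, hye, div_pow, div_pow, ← add_div, hD]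
    rw [show ((1 - α) * c) ^ 2 + ((1 + α) * s) ^ 2 =
      (1 - α) ^ 2 * c ^ 2 + (1 + α) ^ 2 * s ^ 2 by ring]
    rw [← hD, pow_two, div_mul_cancel_left₀ hDne, inv_eq_one_div]
  have h2 : x ^ 2 / (1 - α) ^ 2 + y ^ 2 / (1 + α) ^ 2 = 1 / D ^ 2 := by
    rw [hxe, hye]
    field_simp
    linear_combination hpyth
  rw [h1]
  linear_combination -h2
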